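/- Let ρ_{ABC} be a density operator on a tripartite finite-dimensional system such that the reduced state on AC is product: ρ_{AC} = ρ_A ⊗ ρ_C. Let D be any generalized divergence, i.e., a function on pairs of density operators that is monotone non-increasing under the simultaneous application of a quantum channel to both arguments. Then I_D(A;BC)_ρ ≤ I_D(AC;B)_ρ, where I_D(A;B)_ρ = inf_{σ_B} D(ρ_{AB} ‖ ρ_A ⊗ σ_B) with the infimum over density operators σ_B. -/

import Mathlib

open Matrix BigOperators Kronecker
open scoped Classical ComplexOrder

variable {d : Type*} [Fintype d] [DecidableEq d]

/-- Trace norm of a matrix. -/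
noncomputable def traceNorm (A : Matrix d d ℂ) : ℝ :=
  (((Matrix.posSemidef_conjTranspose_mul_self A).1.eigenvectorUnitary : Matrix d d ℂ) *
      Matrix.diagonal (fun i => ((Real.sqrt
        ((Matrix.posSemidef_conjTranspose_mul_self A).1.eigenvalues i) : ℝ) : ℂ)) *
      star ((Matrix.posSemidef_conjTranspose_mul_self A).1.eigenvectorUnitary : Matrix d d ℂ)
    ).trace.re

/-- Spectral functional calculus for a Hermitian matrix. -/
noncomputable def specFun {A : Matrix d d ℂ} (hA : A.IsHermitian) (f : ℝ → ℝ) :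
    Matrix d d ℂ :=
  (hA.eigenvectorUnitary : Matrix d d ℂ) *
    Matrix.diagonal (fun i => (f (hA.eigenvalues i) : ℂ)) *
    star (hA.eigenvectorUnitary : Matrix d d ℂ)

/-- Matrix power via functional calculus, with the convention `0 ^ s = 0` on kernels.
For `s = -1/2` this gives the square root of the Moore–Penrose inverse. -/
noncomputable def mpow (A : Matrix d d ℂ) (s : ℝ) : Matrix d d ℂ :=
  if hA : A.PosSemidef then
    specFun hA.1 (fun t => if t = 0 then 0 else t ^ s)
  else 0

/-- Base-2 matrix logarithm via functional calculus, `log 0 := 0` on kernels. -/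
noncomputable def mlog (A : Matrix d d ℂ) : Matrix d d ℂ :=
  if hA : A.PosSemidef then
    specFun hA.1 (fun t => if t = 0 then 0 else Real.logb 2 t)
  else 0

/-- Positive spectral projection `{X ≥ 0}` of a Hermitian matrix. -/
noncomputable def posProj {A : Matrix d d ℂ} (hA : A.IsHermitian) : Matrix d d ℂ :=
  specFun hA (fun t => if 0 ≤ t then 1 else 0)

/-- A density operator: positive semi-definite with unit trace. -/
def IsDensity (ρ : Matrix d d ℂ) : Prop := ρ.PosSemidef ∧ ρ.trace = 1

/-- A measurement operator: `0 ≤ Λ ≤ I`. -/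
def IsMeasOp (Λ : Matrix d d ℂ) : Prop := Λ.PosSemidef ∧ (1 - Λ).PosSemidef

/-- `n`-fold tensor power of a matrix. -/
def tpow (ρ : Matrix d d ℂ) (n : ℕ) : Matrix (Fin n → d) (Fin n → d) ℂ :=
  Matrix.of fun x y => ∏ i, ρ (x i) (y i)

/-- Partial trace over the right (second) tensor factor. -/
noncomputable def ptraceR {a b : Type*} [Fintype a] [Fintype b]
    (ρ : Matrix (a × b) (a × b) ℂ) : Matrix a a ℂ :=
  Matrix.of fun i j => ∑ k, ρ (i, k) (j, k)

/-- Partial trace over the left (first) tensor factor. -/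
noncomputable def ptraceL {a b : Type*} [Fintype a] [Fintype b]
    (ρ : Matrix (a × b) (a × b) ℂ) : Matrix b b ℂ :=
  Matrix.of fun i j => ∑ k, ρ (k, i) (k, j)

/-- Quantum relative entropy (base 2), via the `mlog` convention. -/
noncomputable def qRelEnt (ρ σ : Matrix d d ℂ) : ℝ :=
  ((ρ * (mlog ρ - mlog σ)).trace).re

/-- ε-hypothesis testing relative entropy. -/
noncomputable def DH (ε : ℝ) (ρ σ : Matrix d d ℂ) : ℝ :=
  -Real.logb 2 (sInf {x : ℝ | ∃ Λ : Matrix d d ℂ,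
    IsMeasOp Λ ∧ 1 - ε ≤ ((Λ * ρ).trace).re ∧ x = ((Λ * σ).trace).re})

/-- Petz–Rényi relative entropy of order α. -/
noncomputable def DAlpha (α : ℝ) (ρ σ : Matrix d d ℂ) : ℝ :=
  (1 / (α - 1)) * Real.logb 2 (((mpow ρ α * mpow σ (1 - α)).trace).re)

/-- Shannon entropy (bits) of a probability vector. -/
noncomputable def shannon (p : d → ℝ) : ℝ := -∑ x, p x * Real.logb 2 (p x)

/-- von Neumann entropy (bits). -/
noncomputable def vnEntropy (A : Matrix d d ℂ) : ℝ :=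
  if hA : A.IsHermitian then -∑ i, hA.eigenvalues i * Real.logb 2 (hA.eigenvalues i) else 0

/-- Collision (order-2) conditional entropy `H₂(C|S)` of a bipartite state on `s ⊗ c`. -/
noncomputable def H2cond {s c : Type*} [Fintype s] [Fintype c] [DecidableEq s] [DecidableEq c]
    (ω : Matrix (s × c) (s × c) ℂ) : ℝ :=
  -Real.logb 2 ((ω * (mpow (ptraceR ω) (-(1/2)) ⊗ₖ (1 : Matrix c c ℂ)) *
      ω * (mpow (ptraceR ω) (-(1/2)) ⊗ₖ (1 : Matrix c c ℂ))).trace).re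

/-- Regrouping of a tripartite index `A × (B × C)` as `(A × C) × B`. -/
def regroupACB (a b c : Type*) : a × b × c ≃ (a × c) × b where
  toFun := fun p => ((p.1, p.2.2), p.2.1)
  invFun := fun p => (p.1.1, (p.2, p.1.2))
  left_inv := fun _ => rfl
  right_inv := fun _ => rfl

/-- A quantum channel (CPTP map), presented by a Kraus decomposition. -/
def IsQChannel {a b : Type} [Fintype a] [Fintype b] [DecidableEq a] [DecidableEq b]
    (Φ : Matrix a a ℂ → Matrix b b ℂ) : Prop :=
  ∃ (ι : Type) (inst : Fintype ι) (K : ι → Matrix b a ℂ),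
    (∀ X, Φ X = ∑ i ∈ @Finset.univ ι inst, K i * X * (K i)ᴴ) ∧
    ∑ i ∈ @Finset.univ ι inst, (K i)ᴴ * K i = 1


section AuxLemmas

lemma posSemidef_iff_eq_transpose_mul_self' {n : Type*} [Fintype n] [DecidableEq n]
    {A : Matrix n n ℂ} : A.PosSemidef ↔ ∃ B : Matrix n n ℂ, A = Bᴴ * B := by
  open scoped MatrixOrder in
  constructor
  · intro hA
    exact CStarAlgebra.nonneg_iff_eq_star_mul_self.mp hA.nonneg
  · rintro ⟨B, rfl⟩
    exact Matrix.posSemidef_conjTranspose_mul_self B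

lemma trace_ptraceR' {a b : Type*} [Fintype a] [Fintype b] (ρ : Matrix (a × b) (a × b) ℂ) :
    (ptraceR ρ).trace = ρ.trace := by
  simp [ptraceR, Matrix.trace, Matrix.diag, Fintype.sum_prod_type]

lemma trace_ptraceL' {a b : Type*} [Fintype a] [Fintype b] (ρ : Matrix (a × b) (a × b) ℂ) :
    (ptraceL ρ).trace = ρ.trace := by
  simp only [ptraceL, Matrix.trace, Matrix.diag, Matrix.of_apply, Fintype.sum_prod_type]
  exact Finset.sum_comm

lemma posSemidef_ptraceR' {a b : Type*} [Fintype a] [Fintype b] [DecidableEq b]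
    {ρ : Matrix (a × b) (a × b) ℂ} (h : ρ.PosSemidef) : (ptraceR ρ).PosSemidef := by
  refine Matrix.PosSemidef.of_dotProduct_mulVec_nonneg ?_ ?_
  · ext i j
    simp only [ptraceR, Matrix.conjTranspose_apply, Matrix.of_apply, star_sum]
    exact Finset.sum_congr rfl fun k _ => congrFun (congrFun h.1 (i,k)) (j,k)
  · intro x
    calc (0:ℂ) ≤ ∑ k : b, star (fun p : a × b => if p.2 = k then x p.1 else 0) ⬝ᵥ
        ρ *ᵥ (fun p : a × b => if p.2 = k then x p.1 else 0) :=
          Finset.sum_nonneg fun k _ => h.dotProduct_mulVec_nonneg _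
    _ = star x ⬝ᵥ ptraceR ρ *ᵥ x := by
      simp only [dotProduct, Matrix.mulVec, ptraceR, Matrix.of_apply, Pi.star_apply,
        Fintype.sum_prod_type, Finset.mul_sum, Finset.sum_mul, apply_ite, star_zero, ite_mul,
        mul_ite, zero_mul, mul_zero]
      rw [Finset.sum_comm]
      refine Finset.sum_congr rfl fun k _ => ?_
      simp only [Finset.sum_ite_irrel, Finset.sum_const_zero, Finset.sum_ite_eq',
        Finset.mem_univ, if_true]
      exact Finset.sum_comm

lemma posSemidef_ptraceL' {a b : Type*} [Fintype a] [Fintype b] [DecidableEq a]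
    {ρ : Matrix (a × b) (a × b) ℂ} (h : ρ.PosSemidef) : (ptraceL ρ).PosSemidef := by
  refine Matrix.PosSemidef.of_dotProduct_mulVec_nonneg ?_ ?_
  · ext i j
    simp only [ptraceL, Matrix.conjTranspose_apply, Matrix.of_apply, star_sum]
    exact Finset.sum_congr rfl fun k _ => congrFun (congrFun h.1 (k,i)) (k,j)
  · intro x
    calc (0:ℂ) ≤ ∑ k : a, star (fun p : a × b => if p.1 = k then x p.2 else 0) ⬝ᵥ
        ρ *ᵥ (fun p : a × b => if p.1 = k then x p.2 else 0) :=
          Finset.sum_nonneg fun k _ => h.dotProduct_mulVec_nonneg _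
    _ = star x ⬝ᵥ ptraceL ρ *ᵥ x := by
      simp only [dotProduct, Matrix.mulVec, ptraceL, Matrix.of_apply, Pi.star_apply,
        Fintype.sum_prod_type, Finset.mul_sum, Finset.sum_mul, apply_ite, star_zero, ite_mul,
        mul_ite, zero_mul, mul_zero]
      simp only [Finset.sum_ite_irrel, Finset.sum_const_zero, Finset.sum_ite_eq',
        Finset.mem_univ, if_true, Finset.mul_sum]
      rw [Finset.sum_comm]
      refine Finset.sum_congr rfl fun i _ => ?_
      exact Finset.sum_comm

lemma posSemidef_kron' {a b : Type*} [Fintype a] [Fintype b] [DecidableEq a] [DecidableEq b]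
    {A : Matrix a a ℂ} {B : Matrix b b ℂ} (hA : A.PosSemidef) (hB : B.PosSemidef) :
    (A ⊗ₖ B).PosSemidef := by
  obtain ⟨A', rfl⟩ := posSemidef_iff_eq_transpose_mul_self'.mp hA
  obtain ⟨B', rfl⟩ := posSemidef_iff_eq_transpose_mul_self'.mp hB
  rw [Matrix.mul_kronecker_mul]
  have : A'ᴴ ⊗ₖ B'ᴴ = (A' ⊗ₖ B')ᴴ := by
    ext i j
    simp [Matrix.conjTranspose_apply, Matrix.kroneckerMap_apply]
  rw [this]
  exact Matrix.posSemidef_conjTranspose_mul_self _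

lemma trace_reindex' {m n : Type*} [Fintype m] [Fintype n] (e : m ≃ n) (M : Matrix m m ℂ) :
    (Matrix.reindex e e M).trace = M.trace := by
  simp only [Matrix.reindex_apply, Matrix.trace, Matrix.diag, Matrix.submatrix_apply]
  exact Equiv.sum_comp e.symm (fun i => M i i)

lemma isQChannel_reindex' {m n : Type} [Fintype m] [Fintype n] [DecidableEq m] [DecidableEq n]
    (e : m ≃ n) : IsQChannel (fun X : Matrix m m ℂ => Matrix.reindex e e X) := by
  refine ⟨PUnit, inferInstance, fun _ => Matrix.of (fun i j => if j = e.symm i then 1 else 0),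
    fun X => ?_, ?_⟩
  · ext i j
    simp [Matrix.mul_apply, Matrix.conjTranspose_apply, apply_ite, ite_mul, mul_ite,
      Finset.sum_ite_eq', Finset.sum_ite_irrel, Finset.sum_const_zero]
  · ext i j
    simp only [Finset.sum_const, Finset.card_univ, Fintype.card_punit, one_smul]
    simp [Matrix.mul_apply, Matrix.conjTranspose_apply, Matrix.one_apply, apply_ite,
      Equiv.eq_symm_apply, Finset.sum_ite_eq, eq_comm]

lemma isQChannel_trace' {m : Type} [Fintype m] [DecidableEq m] :
    IsQChannel (fun X : Matrix m m ℂ => X.trace • (1 : Matrix PUnit PUnit ℂ)) := by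
  refine ⟨m, inferInstance, fun k => Matrix.of (fun _ j => if j = k then 1 else 0),
    fun X => ?_, ?_⟩
  · ext i j
    simp [Matrix.mul_apply, Matrix.conjTranspose_apply, apply_ite, ite_mul, mul_ite,
      Finset.sum_ite_eq', Finset.sum_ite_irrel, Finset.sum_const_zero, Matrix.trace,
      Matrix.diag, Matrix.one_apply, Matrix.sum_apply]
  · ext i j
    simp [Matrix.mul_apply, Matrix.conjTranspose_apply, Matrix.one_apply, apply_ite,
      Finset.sum_ite_eq, Matrix.sum_apply, eq_comm]

end AuxLemmas

/-- If `ρ_{AC} = ρ_A ⊗ ρ_C`, then for any generalized divergence `D` (monotone under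
quantum channels) the generalized mutual informations satisfy
`I_D(A;BC)_ρ ≤ I_D(AC;B)_ρ`. -/
theorem genDiv_mutual_info_swap
    (D : ∀ (α : Type) [Fintype α] [DecidableEq α], Matrix α α ℂ → Matrix α α ℂ → ℝ)
    (hmono : ∀ (α β : Type) [Fintype α] [DecidableEq α] [Fintype β] [DecidableEq β]
      (Φ : Matrix α α ℂ → Matrix β β ℂ), IsQChannel Φ →
      ∀ ρ σ : Matrix α α ℂ, IsDensity ρ → IsDensity σ → D β (Φ ρ) (Φ σ) ≤ D α ρ σ)
    (a b c : Type) [Fintype a] [Fintype b] [Fintype c]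
    [DecidableEq a] [DecidableEq b] [DecidableEq c]
    (ρ : Matrix (a × b × c) (a × b × c) ℂ) (hρ : IsDensity ρ)
    (hprod : ptraceR (Matrix.reindex (regroupACB a b c) (regroupACB a b c) ρ) =
      ptraceR ρ ⊗ₖ ptraceL (ptraceL ρ)) :
    sInf {x : ℝ | ∃ σ : Matrix (b × c) (b × c) ℂ, IsDensity σ ∧
        x = D (a × b × c) ρ (ptraceR ρ ⊗ₖ σ)} ≤
      sInf {x : ℝ | ∃ σB : Matrix b b ℂ, IsDensity σB ∧
        x = D ((a × c) × b) (Matrix.reindex (regroupACB a b c) (regroupACB a b c) ρ)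
          (ptraceR (Matrix.reindex (regroupACB a b c) (regroupACB a b c) ρ) ⊗ₖ σB)} := by
  classical
  obtain ⟨hρpsd, hρtr⟩ := hρ
  have hne : Nonempty (a × b × c) := by
    by_contra h
    rw [not_nonempty_iff] at h
    rw [Matrix.trace] at hρtr
    simp at hρtr
  obtain ⟨x0, y0, z0⟩ := hne.some
  have hb : Nonempty b := ⟨y0⟩
  set e := regroupACB a b c with he
  set ρ' := Matrix.reindex e e ρ with hρ'def
  have hρ'psd : ρ'.PosSemidef := hρpsd.submatrix _
  have hρ'tr : ρ'.trace = 1 := by rw [hρ'def, trace_reindex']; exact hρtr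
  set ρA := ptraceR ρ with hρAdef
  set ρC := ptraceL (ptraceL ρ) with hρCdef
  have hρAden : IsDensity ρA := ⟨posSemidef_ptraceR' hρpsd, by
    rw [hρAdef, trace_ptraceR']; exact hρtr⟩
  have hρCden : IsDensity ρC := ⟨posSemidef_ptraceL' (posSemidef_ptraceL' hρpsd), by
    rw [hρCdef, trace_ptraceL', trace_ptraceL']; exact hρtr⟩
  have hbddS : BddBelow {x : ℝ | ∃ σ : Matrix (b × c) (b × c) ℂ, IsDensity σ ∧
      x = D (a × b × c) ρ (ptraceR ρ ⊗ₖ σ)} := by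
    refine ⟨D PUnit 1 1, ?_⟩
    rintro x ⟨σ, hσ, rfl⟩
    have hden2 : IsDensity (ptraceR ρ ⊗ₖ σ) := ⟨posSemidef_kron' hρAden.1 hσ.1, by
      rw [Matrix.trace_kronecker, hρAden.2, hσ.2, one_mul]⟩
    have hm := hmono _ PUnit _ isQChannel_trace' ρ (ptraceR ρ ⊗ₖ σ) ⟨hρpsd, hρtr⟩ hden2
    simpa [hρtr, hden2.2] using hm
  have hσu : IsDensity (((Fintype.card b : ℂ))⁻¹ • (1 : Matrix b b ℂ)) := by
    have hcard : (Fintype.card b : ℂ) ≠ 0 := Nat.cast_ne_zero.mpr Fintype.card_ne_zero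
    constructor
    · rw [posSemidef_iff_eq_transpose_mul_self']
      refine ⟨((Real.sqrt (Fintype.card b)⁻¹ : ℝ) : ℂ) • 1, ?_⟩
      rw [Matrix.conjTranspose_smul, Matrix.conjTranspose_one, Matrix.smul_mul,
        Matrix.mul_smul, one_mul, smul_smul]
      congr 1
      rw [Complex.star_def, Complex.conj_ofReal, ← Complex.ofReal_mul,
        Real.mul_self_sqrt (by positivity)]
      push_cast
      ring
    · rw [Matrix.trace_smul, Matrix.trace_one, smul_eq_mul]
      exact inv_mul_cancel₀ hcard
  refine le_csInf ⟨_, ⟨_, hσu, rfl⟩⟩ ?_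
  rintro t ⟨σB, hσB, rfl⟩
  have hσden : IsDensity (σB ⊗ₖ ρC) := ⟨posSemidef_kron' hσB.1 hρCden.1, by
    rw [Matrix.trace_kronecker, hσB.2, hρCden.2, one_mul]⟩
  have hρ'den : IsDensity ρ' := ⟨hρ'psd, hρ'tr⟩
  have hρ'ACden : IsDensity (ptraceR ρ' ⊗ₖ σB) :=
    ⟨posSemidef_kron' (posSemidef_ptraceR' hρ'psd) hσB.1, by
      rw [Matrix.trace_kronecker, trace_ptraceR', hρ'tr, hσB.2, one_mul]⟩
  have hkey : Matrix.reindex e.symm e.symm (ptraceR ρ' ⊗ₖ σB) = ρA ⊗ₖ (σB ⊗ₖ ρC) := by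
    rw [hprod]
    ext ⟨i, j, k⟩ ⟨i', j', k'⟩
    simp only [Matrix.reindex_apply, Matrix.submatrix_apply, Equiv.symm_symm, he, regroupACB,
      Equiv.coe_fn_mk, Matrix.kroneckerMap_apply]
    ring
  have hback : Matrix.reindex e.symm e.symm ρ' = ρ := by
    rw [hρ'def]
    ext p q
    simp
  have hle := hmono _ _ (fun X => Matrix.reindex e.symm e.symm X) (isQChannel_reindex' e.symm)
    ρ' (ptraceR ρ' ⊗ₖ σB) hρ'den hρ'ACden
  simp only [hback, hkey] at hle
  exact (csInf_le hbddS ⟨σB ⊗ₖ ρC, hσden, rfl⟩).trans hle
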